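/- arXiv:2209.06362 — 4 statements merged into one kernel-verified Lean document; each statement's English description precedes it below -/
import Mathlib

section
/- Let G be a weighted graph with positive integer weights w, and let k be a positive integer with k ≥ max w. Define the k-spinning S_k(G) as the graph with vertex set VG × Z_k, where (u,i) is adjacent to (v,j) iff (uv ∈ EG and j ∈ {i, i+1, ..., i+w_{uv}-1} mod k) or (u = v and i ≠ j). Then a point θ ∈ R^{|VG|} is an equilibrium of the Kuramoto system on G (i.e., for all v, ∑_{u ~ v} w_{uv} sin(θ_u - θ_v) = 0) if and only if the lifted point θ^σ defined by θ^σ_{(u,i)} = θ_u is an equilibrium of the unweighted Kuramoto system on S_k(G) (i.e., for all vertices x of S_k(G), ∑_{y ~ x} sin(θ^σ_y - θ^σ_x) = 0). -/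
open Real Finset

/-- Adjacency of the `k`-spinning of a weighted graph with oriented weight
function `w` (each edge carries its weight in exactly one direction). -/
def spinAdj {V : Type*} (k : ℕ) (w : V → V → ℕ) (x y : V × ZMod k) : Prop :=
  (y.2 - x.2).val < w x.1 y.1 ∨ (x.2 - y.2).val < w y.1 x.1 ∨ (x.1 = y.1 ∧ x.2 ≠ y.2)

instance {V : Type*} [DecidableEq V] (k : ℕ) (w : V → V → ℕ) (x y : V × ZMod k) :
    Decidable (spinAdj k w x y) := by unfold spinAdj; infer_instance

lemma card_val_lt (k m : ℕ) [NeZero k] (hm : m ≤ k) :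
    ((univ : Finset (ZMod k)).filter (fun d => d.val < m)).card = m := by
  have h := Finset.card_bij (s := Finset.range m)
      (t := (univ : Finset (ZMod k)).filter (fun d => d.val < m))
      (fun a _ => (a : ZMod k))
      (fun a ha => by
        have ha' : a < m := Finset.mem_range.mp ha
        simp [ZMod.val_cast_of_lt (lt_of_lt_of_le ha' hm), ha'])
      (fun a ha b hb hab => by
        have h1 := congrArg ZMod.val hab
        rwa [ZMod.val_cast_of_lt (lt_of_lt_of_le (Finset.mem_range.mp ha) hm),
          ZMod.val_cast_of_lt (lt_of_lt_of_le (Finset.mem_range.mp hb) hm)] at h1)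
      (fun d hd => ⟨d.val, Finset.mem_range.mpr (Finset.mem_filter.mp hd).2, by
        simp [ZMod.natCast_val, ZMod.cast_id]⟩)
  simpa using h.symm

lemma sum_ite_val_lt (k m : ℕ) [NeZero k] (hm : m ≤ k) (s : ℝ) :
    ∑ d : ZMod k, (if d.val < m then s else 0) = m * s := by
  rw [Finset.sum_ite, Finset.sum_const, Finset.sum_const_zero, add_zero,
    card_val_lt k m hm, nsmul_eq_mul]

lemma spinInnerSum {V : Type*} [DecidableEq V] (w : V → V → ℕ)
    (horient : ∀ u v, w u v = 0 ∨ w v u = 0)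
    (k : ℕ) [NeZero k] (hmax : ∀ u v, w u v ≤ k) (θ : V → ℝ) (v u : V) (i : ZMod k) :
    ∑ j : ZMod k, (if spinAdj k w (v, i) (u, j) then Real.sin (θ u - θ v) else 0)
      = ((w u v + w v u : ℕ) : ℝ) * Real.sin (θ u - θ v) := by
  by_cases huv : u = v
  · subst huv; simp [sub_self]
  · have hne : ¬ (v = u) := fun h => huv h.symm
    set s := Real.sin (θ u - θ v) with hs
    rcases horient u v with h0 | h0
    · have hcond : ∀ j : ZMod k, spinAdj k w (v, i) (u, j) ↔ (j - i).val < w v u := by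
        intro j; simp [spinAdj, h0, hne]
      calc ∑ j : ZMod k, (if spinAdj k w (v, i) (u, j) then s else 0)
          = ∑ j : ZMod k, (if (j - i).val < w v u then s else 0) :=
            Finset.sum_congr rfl (fun j _ => if_congr (hcond j) rfl rfl)
        _ = ∑ d : ZMod k, (if d.val < w v u then s else 0) :=
            Fintype.sum_equiv (Equiv.subRight i) _ _ (fun j => rfl)
        _ = (w v u : ℝ) * s := sum_ite_val_lt k _ (hmax v u) s
        _ = ((w u v + w v u : ℕ) : ℝ) * s := by rw [h0]; push_cast; ring
    · have hcond : ∀ j : ZMod k, spinAdj k w (v, i) (u, j) ↔ (i - j).val < w u v := by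
        intro j; simp [spinAdj, h0, hne]
      calc ∑ j : ZMod k, (if spinAdj k w (v, i) (u, j) then s else 0)
          = ∑ j : ZMod k, (if (i - j).val < w u v then s else 0) :=
            Finset.sum_congr rfl (fun j _ => if_congr (hcond j) rfl rfl)
        _ = ∑ d : ZMod k, (if d.val < w u v then s else 0) :=
            Fintype.sum_equiv (Equiv.subLeft i) _ _ (fun j => rfl)
        _ = (w u v : ℝ) * s := sum_ite_val_lt k _ (hmax u v) s
        _ = ((w u v + w v u : ℕ) : ℝ) * s := by rw [h0]; push_cast; ring

/-- A point `θ` is an equilibrium of the weighted Kuramoto system on `G`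
iff its lift `θ^σ` is an equilibrium of the unweighted Kuramoto system on the
`k`-spinning `S_k(G)`. -/
theorem equilibrium_iff_spinning_equilibrium {V : Type*} [Fintype V] [DecidableEq V]
    (w : V → V → ℕ) (hdiag : ∀ v, w v v = 0)
    (horient : ∀ u v, w u v = 0 ∨ w v u = 0)
    (k : ℕ) [NeZero k] (hmax : ∀ u v, w u v ≤ k)
    (θ : V → ℝ) :
    (∀ v, ∑ u, ((w u v + w v u : ℕ) : ℝ) * Real.sin (θ u - θ v) = 0) ↔
    (∀ x : V × ZMod k,
      ∑ y : V × ZMod k,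
        (if spinAdj k w x y then Real.sin (θ y.1 - θ x.1) else 0) = 0) := by
  have key : ∀ (v : V) (i : ZMod k),
      ∑ y : V × ZMod k, (if spinAdj k w (v, i) y then Real.sin (θ y.1 - θ v) else 0)
        = ∑ u, ((w u v + w v u : ℕ) : ℝ) * Real.sin (θ u - θ v) := by
    intro v i
    rw [Fintype.sum_prod_type]
    exact Finset.sum_congr rfl (fun u _ => spinInnerSum w horient k hmax θ v u i)
  constructor
  · intro h x
    obtain ⟨v, i⟩ := x
    rw [key v i]
    exact h v
  · intro h v
    rw [← key v 0]
    exact h (v, 0)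
end

section
/- Let θ be an equilibrium of a weighted graph G and let λ be an eigenvalue of the Hessian U''_{θ^σ} of the k-spinning S_k(G) at the lifted point θ^σ, with eigenvector x. For u ∈ VG set X_u = ∑_{j ∈ Z_k} x_{(u,j)}. Then either X ≠ 0 and λ is an eigenvalue of the Hessian U''_θ of G at θ with eigenvector X, or X_u = 0 for all u. -/
open Real Finset

/-- Hessian of the Kuramoto potential of the weighted graph `G` at `θ`. -/
noncomputable def hessW {V : Type*} [Fintype V] [DecidableEq V]
    (w : V → V → ℕ) (θ : V → ℝ) : Matrix V V ℝ :=
  fun u v => if u = v then ∑ x, ((w x v + w v x : ℕ) : ℝ) * Real.cos (θ x - θ v)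
             else -(((w u v + w v u : ℕ) : ℝ) * Real.cos (θ u - θ v))

/-- Hessian of the Kuramoto potential of the (unweighted) `k`-spinning `S_k(G)`
at the lifted point `θ^σ`. -/
noncomputable def hessS {V : Type*} [Fintype V] [DecidableEq V]
    (k : ℕ) [NeZero k] (w : V → V → ℕ) (θ : V → ℝ) :
    Matrix (V × ZMod k) (V × ZMod k) ℝ :=
  fun x y => if x = y then ∑ z, (if spinAdj k w x z then Real.cos (θ z.1 - θ x.1) else 0)
             else if spinAdj k w x y then -Real.cos (θ x.1 - θ y.1) else 0

lemma card_val_lt_s5 {k : ℕ} [NeZero k] {a : ℕ} (ha : a ≤ k) :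
    (Finset.univ.filter (fun c : ZMod k => c.val < a)).card = a := by
  conv_rhs => rw [← Finset.card_range a]
  refine Finset.card_nbij' (fun c => c.val) (fun m => (m : ZMod k)) ?_ ?_ ?_ ?_
  · intro c hc; simpa using (Finset.mem_filter.mp hc).2
  · intro m hm
    simp only [Finset.mem_coe, Finset.mem_range] at hm
    simp [ZMod.val_natCast_of_lt (lt_of_lt_of_le hm ha), hm]
  · intro c hc; exact ZMod.natCast_rightInverse c
  · intro m hm
    simp only [Finset.mem_coe, Finset.mem_range] at hm
    exact ZMod.val_natCast_of_lt (lt_of_lt_of_le hm ha)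

lemma sum_if_val_lt {k : ℕ} [NeZero k] {a : ℕ} (ha : a ≤ k) (c : ℝ) :
    ∑ i : ZMod k, (if i.val < a then c else 0) = (a : ℝ) * c := by
  rw [Finset.sum_ite, Finset.sum_const, Finset.sum_const_zero, add_zero,
    card_val_lt_s5 ha, nsmul_eq_mul]

lemma count_sum {k : ℕ} [NeZero k] {a b : ℕ} (ha : a ≤ k) (hb : b ≤ k)
    (hab : a = 0 ∨ b = 0) (j : ZMod k) (c : ℝ) :
    ∑ i : ZMod k, (if (i - j).val < a ∨ (j - i).val < b then c else 0)
      = ((a + b : ℕ) : ℝ) * c := by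
  rcases hab with h | h
  · subst h
    simp only [Nat.not_lt_zero, false_or, Nat.zero_add]
    rw [Fintype.sum_equiv (Equiv.subLeft j)
      (fun i => if (j - i).val < b then c else 0)
      (fun i => if i.val < b then c else 0) (fun i => by simp [Equiv.subLeft]; exact if_congr Iff.rfl rfl rfl)]
    exact sum_if_val_lt hb c
  · subst h
    simp only [Nat.not_lt_zero, or_false, Nat.add_zero]
    rw [Fintype.sum_equiv (Equiv.subRight j)
      (fun i => if (i - j).val < a then c else 0)
      (fun i => if i.val < a then c else 0) (fun i => by simp [Equiv.subRight]; exact if_congr Iff.rfl rfl rfl)]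
    exact sum_if_val_lt ha c

lemma sum_ne_one {k : ℕ} [NeZero k] (j : ZMod k) :
    ∑ j' : ZMod k, (if j ≠ j' then (1 : ℝ) else 0) = (k : ℝ) - 1 := by
  rw [Finset.sum_ite, Finset.sum_const, Finset.sum_const_zero, add_zero,
    nsmul_eq_mul, mul_one]
  have h : (Finset.univ.filter fun j' : ZMod k => j ≠ j') = Finset.univ.erase j := by
    ext a; simp [Finset.mem_erase, ne_comm, eq_comm]
  rw [h, Finset.card_erase_of_mem (Finset.mem_univ j), Finset.card_univ, ZMod.card]
  have : 1 ≤ k := Nat.one_le_iff_ne_zero.mpr (NeZero.ne k)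
  push_cast [this]
  ring


lemma rowSumDiag {V : Type*} [Fintype V] [DecidableEq V]
    (w : V → V → ℕ) (hdiag : ∀ v, w v v = 0)
    (horient : ∀ u v, w u v = 0 ∨ w v u = 0)
    (k : ℕ) [NeZero k] (hmax : ∀ u v, w u v ≤ k) (θ : V → ℝ)
    (u : V) (j : ZMod k) :
    ∑ i : ZMod k, hessS k w θ (u, i) (u, j) = hessW w θ u u := by
  rw [← Finset.add_sum_erase _ _ (Finset.mem_univ j)]
  have hdiagentry : hessS k w θ (u, j) (u, j)
      = ∑ v', (if v' = u then (k : ℝ) - 1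
          else ((w u v' + w v' u : ℕ) : ℝ) * Real.cos (θ v' - θ u)) := by
    rw [hessS, if_pos rfl, Fintype.sum_prod_type]
    refine Finset.sum_congr rfl fun v' _ => ?_
    by_cases hv' : v' = u
    · rw [hv', if_pos rfl]
      have hc : ∀ j' : ZMod k, spinAdj k w (u, j) (u, j') ↔ j ≠ j' := by
        intro j'; unfold spinAdj; simp [hdiag u]
      calc ∑ j' : ZMod k, (if spinAdj k w (u, j) (u, j')
              then Real.cos (θ u - θ u) else 0)
          = ∑ j' : ZMod k, (if j ≠ j' then (1 : ℝ) else 0) := by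
            refine Finset.sum_congr rfl fun j' _ => ?_
            rw [if_congr (hc j') (by rw [sub_self, Real.cos_zero]) rfl]
        _ = (k : ℝ) - 1 := sum_ne_one j
    · rw [if_neg hv']
      have hc : ∀ j' : ZMod k, spinAdj k w (u, j) (v', j')
          ↔ ((j' - j).val < w u v' ∨ (j - j').val < w v' u) := by
        intro j'; unfold spinAdj
        simp [show ¬ u = v' from fun h => hv' h.symm]
      calc ∑ j' : ZMod k, (if spinAdj k w (u, j) (v', j')
              then Real.cos (θ v' - θ u) else 0)
          = ∑ j' : ZMod k, (if (j' - j).val < w u v' ∨ (j - j').val < w v' u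
              then Real.cos (θ v' - θ u) else 0) := by
            refine Finset.sum_congr rfl fun j' _ => ?_
            rw [if_congr (hc j') rfl rfl]
        _ = ((w u v' + w v' u : ℕ) : ℝ) * Real.cos (θ v' - θ u) :=
            count_sum (hmax u v') (hmax v' u) (horient u v') j _
  have hoff : ∀ i ∈ Finset.univ.erase j,
      hessS k w θ (u, i) (u, j) = -1 := by
    intro i hi
    have hij : i ≠ j := (Finset.mem_erase.mp hi).1
    have hne : (u, i) ≠ (u, j) := by simp [hij]
    have hadj : spinAdj k w (u, i) (u, j) := Or.inr (Or.inr ⟨rfl, hij⟩)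
    rw [hessS, if_neg hne, if_pos hadj]
    simp
  rw [hdiagentry, Finset.sum_congr rfl hoff, Finset.sum_const,
    Finset.card_erase_of_mem (Finset.mem_univ j), Finset.card_univ, ZMod.card]
  have hsplit : ∀ v' : V, (if v' = u then (k : ℝ) - 1
      else ((w u v' + w v' u : ℕ) : ℝ) * Real.cos (θ v' - θ u))
      = ((w v' u + w u v' : ℕ) : ℝ) * Real.cos (θ v' - θ u)
        + (if v' = u then (k : ℝ) - 1 else 0) := by
    intro v'
    by_cases hv' : v' = u
    · rw [hv']; simp [hdiag u]
    · rw [if_neg hv', if_neg hv', add_zero]; push_cast; ring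
  rw [Finset.sum_congr rfl (fun v' _ => hsplit v'), Finset.sum_add_distrib,
    Finset.sum_ite_eq' Finset.univ u (fun _ => (k : ℝ) - 1)]
  have h1 : 1 ≤ k := Nat.one_le_iff_ne_zero.mpr (NeZero.ne k)
  rw [hessW, if_pos rfl]
  simp only [Finset.mem_univ, if_true, nsmul_eq_mul, Nat.cast_sub h1, Nat.cast_one]
  push_cast
  ring_nf
  exact Finset.sum_congr rfl fun x _ => by ring

lemma rowSum {V : Type*} [Fintype V] [DecidableEq V]
    (w : V → V → ℕ) (hdiag : ∀ v, w v v = 0)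
    (horient : ∀ u v, w u v = 0 ∨ w v u = 0)
    (k : ℕ) [NeZero k] (hmax : ∀ u v, w u v ≤ k) (θ : V → ℝ)
    (u v : V) (j : ZMod k) :
    ∑ i : ZMod k, hessS k w θ (u, i) (v, j) = hessW w θ u v := by
  by_cases huv : u = v
  · rw [← huv]; exact rowSumDiag w hdiag horient k hmax θ u j
  · have h1 : ∀ i : ZMod k, hessS k w θ (u, i) (v, j)
        = if (i - j).val < w v u ∨ (j - i).val < w u v
          then -Real.cos (θ u - θ v) else 0 := by
      intro i
      have hne : (u, i) ≠ (v, j) := by simp [huv]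
      have hc : spinAdj k w (u, i) (v, j)
          ↔ ((i - j).val < w v u ∨ (j - i).val < w u v) := by
        unfold spinAdj; simp [huv]; tauto
      rw [hessS, if_neg hne, if_congr hc rfl rfl]
    rw [Finset.sum_congr rfl (fun i _ => h1 i),
      count_sum (hmax v u) (hmax u v) (horient v u) j _]
    rw [hessW, if_neg huv]
    push_cast
    ring

/-- If `λ` is an eigenvalue of the Hessian of the spinning at the lifted equilibrium
with eigenvector `x`, then with `X_u = ∑_j x_{(u,j)}` either `X = 0` or `X` is an
eigenvector of the Hessian of `G` at `θ` with the same eigenvalue. -/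
theorem spinning_eigenvalue_projects {V : Type*} [Fintype V] [DecidableEq V]
    (w : V → V → ℕ) (hdiag : ∀ v, w v v = 0)
    (horient : ∀ u v, w u v = 0 ∨ w v u = 0)
    (k : ℕ) [NeZero k] (hmax : ∀ u v, w u v ≤ k)
    (θ : V → ℝ)
    (hequil : ∀ v, ∑ u, ((w u v + w v u : ℕ) : ℝ) * Real.sin (θ u - θ v) = 0)
    (lam : ℝ) (x : V × ZMod k → ℝ) (hx : x ≠ 0)
    (heig : (hessS k w θ).mulVec x = lam • x) :
    (fun u => ∑ j : ZMod k, x (u, j)) = 0 ∨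
    ((fun u => ∑ j : ZMod k, x (u, j)) ≠ 0 ∧
      (hessW w θ).mulVec (fun u => ∑ j : ZMod k, x (u, j)) =
        lam • fun u => ∑ j : ZMod k, x (u, j)) := by
  by_cases hX : (fun u => ∑ j : ZMod k, x (u, j)) = 0
  · exact Or.inl hX
  · refine Or.inr ⟨hX, ?_⟩
    funext u
    have hp : ∀ p : V × ZMod k,
        ∑ z, hessS k w θ p z * x z = lam * x p := by
      intro p
      have := congrFun heig p
      simpa [Matrix.mulVec, dotProduct] using this
    have lhs : (hessW w θ).mulVec (fun u => ∑ j : ZMod k, x (u, j)) u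
        = ∑ v, hessW w θ u v * ∑ j : ZMod k, x (v, j) := by
      simp [Matrix.mulVec, dotProduct]
    rw [lhs]
    have : ∑ v, hessW w θ u v * ∑ j : ZMod k, x (v, j)
        = ∑ i : ZMod k, ∑ z, hessS k w θ (u, i) z * x z := by
      calc ∑ v, hessW w θ u v * ∑ j : ZMod k, x (v, j)
          = ∑ v, ∑ j : ZMod k, hessW w θ u v * x (v, j) := by
            simp_rw [Finset.mul_sum]
        _ = ∑ v, ∑ j : ZMod k, (∑ i : ZMod k, hessS k w θ (u, i) (v, j)) * x (v, j) := by
            refine Finset.sum_congr rfl fun v _ => Finset.sum_congr rfl fun j _ => ?_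
            rw [rowSum w hdiag horient k hmax θ u v j]
        _ = ∑ v, ∑ j : ZMod k, ∑ i : ZMod k, hessS k w θ (u, i) (v, j) * x (v, j) := by
            simp_rw [Finset.sum_mul]
        _ = ∑ v, ∑ i : ZMod k, ∑ j : ZMod k, hessS k w θ (u, i) (v, j) * x (v, j) := by
            exact Finset.sum_congr rfl fun v _ => Finset.sum_comm
        _ = ∑ i : ZMod k, ∑ v, ∑ j : ZMod k, hessS k w θ (u, i) (v, j) * x (v, j) :=
            Finset.sum_comm
        _ = ∑ i : ZMod k, ∑ z, hessS k w θ (u, i) z * x z := by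
            exact Finset.sum_congr rfl fun i _ =>
              (Fintype.sum_prod_type (fun z : V × ZMod k => hessS k w θ (u, i) z * x z)).symm
    rw [this]
    calc ∑ i : ZMod k, ∑ z, hessS k w θ (u, i) z * x z
        = ∑ i : ZMod k, lam * x (u, i) := Finset.sum_congr rfl fun i _ => hp (u, i)
      _ = lam * ∑ j : ZMod k, x (u, j) := by rw [← Finset.mul_sum]
      _ = (lam • fun u => ∑ j : ZMod k, x (u, j)) u := by simp
end

section
/- Let θ be an equilibrium of a weighted graph G. If λ is an eigenvalue of the Hessian U''_θ of G at θ with eigenvector (x_u)_{u ∈ VG}, then λ is an eigenvalue of the Hessian U''_{θ^σ} of the k-spinning S_k(G) at the lift θ^σ, with eigenvector given by x_{(u,i)} = x_u. -/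
open Real Finset

lemma sum_val_lt (k a : ℕ) [NeZero k] (ha : a ≤ k) (c : ℝ) :
    ∑ d : ZMod k, (if (ZMod.val d) < a then c else 0) = a * c := by
  obtain ⟨m, rfl⟩ := Nat.exists_eq_succ_of_ne_zero (NeZero.ne k)
  have h1 : ∑ d : ZMod (m+1), (if (ZMod.val d) < a then c else 0)
      = ∑ d : Fin (m+1), (if (d : Fin (m+1)).val < a then c else 0) := rfl
  rw [h1, Fin.sum_univ_eq_sum_range (fun n => if n < a then c else 0)]
  rw [← Finset.sum_filter]
  have : (Finset.range (m+1)).filter (fun n => n < a) = Finset.range a := by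
    ext n; simp; omega
  rw [this, Finset.sum_const, Finset.card_range, nsmul_eq_mul]

lemma sum_spin_all {V : Type*} [DecidableEq V] (k : ℕ) [NeZero k] (w : V → V → ℕ)
    (hdiag : ∀ v, w v v = 0) (horient : ∀ u v, w u v = 0 ∨ w v u = 0)
    (hmax : ∀ u v, w u v ≤ k) (u v : V) (i : ZMod k) (c : ℝ) :
    ∑ j : ZMod k, (if spinAdj k w (u, i) (v, j) then c else 0) =
      (if v = u then ((k : ℝ) - 1) * c else ((w u v + w v u : ℕ) : ℝ) * c) := by
  by_cases hv : v = u
  · subst hv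
    simp only [if_pos rfl]
    have hc : ∀ j : ZMod k, spinAdj k w (v, i) (v, j) ↔ ¬ i = j := by
      intro j
      simp [spinAdj, hdiag v]
    simp only [hc]
    have : ∀ j : ZMod k, (if ¬ i = j then c else 0) = c - (if i = j then c else 0) := by
      intro j; split <;> simp_all
    simp only [this, Finset.sum_sub_distrib, Finset.sum_const, Finset.sum_ite_eq,
      Finset.mem_univ, if_pos, Finset.card_univ, ZMod.card, nsmul_eq_mul]
    ring
  · simp only [if_neg hv]
    have hc : ∀ j : ZMod k, spinAdj k w (u, i) (v, j) ↔
        ((j - i).val < w u v ∨ (i - j).val < w v u) := by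
      intro j; simp [spinAdj, Ne.symm hv]
    simp only [hc]
    rcases horient u v with h | h
    · simp only [h, Nat.not_lt_zero, false_or, Nat.zero_add]
      calc ∑ j : ZMod k, (if (i - j).val < w v u then c else 0)
          = ∑ d : ZMod k, (if (ZMod.val d) < w v u then c else 0) := by
            apply Fintype.sum_equiv (Equiv.subLeft i)
            intro j; simp
        _ = ((w v u : ℕ) : ℝ) * c := sum_val_lt k _ (hmax v u) c
    · simp only [h, Nat.not_lt_zero, or_false, Nat.add_zero]
      calc ∑ j : ZMod k, (if (j - i).val < w u v then c else 0)
          = ∑ d : ZMod k, (if (ZMod.val d) < w u v then c else 0) := by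
            apply Fintype.sum_equiv (Equiv.subRight i)
            intro j; simp
        _ = ((w u v : ℕ) : ℝ) * c := sum_val_lt k _ (hmax u v) c

lemma sum_ite_pt {V : Type*} [Fintype V] [DecidableEq V] (u : V) (a : ℝ) (g : V → ℝ) :
    ∑ v, (if v = u then a else g v) = a - g u + ∑ v, g v := by
  have : ∀ v, (if v = u then a else g v) = g v + (if v = u then a - g v else 0) := by
    intro v; split <;> simp_all
  simp only [this, Finset.sum_add_distrib, Finset.sum_ite_eq', Finset.mem_univ, if_pos]
  ring

/-- Every eigenvalue of the Hessian of `G` at an equilibrium `θ` lifts to an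
eigenvalue of the Hessian of the `k`-spinning at `θ^σ`, with the fiber-constant
lift of the eigenvector as eigenvector. -/
theorem eigenvalue_lifts_to_spinning {V : Type*} [Fintype V] [DecidableEq V]
    (w : V → V → ℕ) (hdiag : ∀ v, w v v = 0)
    (horient : ∀ u v, w u v = 0 ∨ w v u = 0)
    (k : ℕ) [NeZero k] (hmax : ∀ u v, w u v ≤ k)
    (θ : V → ℝ)
    (hequil : ∀ v, ∑ u, ((w u v + w v u : ℕ) : ℝ) * Real.sin (θ u - θ v) = 0)
    (lam : ℝ) (x : V → ℝ)
    (heig : (hessW w θ).mulVec x = lam • x) :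
    (hessS k w θ).mulVec (fun p => x p.1) = lam • fun p : V × ZMod k => x p.1 := by
  classical
  have hx : ∀ u, ∑ v, hessW w θ u v * x v = lam * x u := by
    intro u
    have := congrFun heig u
    simpa [Matrix.mulVec, dotProduct] using this
  funext p
  obtain ⟨u, i⟩ := p
  show ∑ q : V × ZMod k, hessS k w θ (u, i) q * x q.1 = lam * x u
  rw [← hx u]
  have hE0 : ¬ spinAdj k w (u, i) (u, i) := by simp [spinAdj, hdiag u]
  have hAu : ((w u u + w u u : ℕ) : ℝ) = 0 := by simp [hdiag u]
  have key : ∀ q : V × ZMod k, hessS k w θ (u, i) q * x q.1 =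
      (if spinAdj k w (u, i) q then -Real.cos (θ u - θ q.1) * x q.1 else 0)
      + (if (u, i) = q then
          (∑ z : V × ZMod k, (if spinAdj k w (u, i) z then Real.cos (θ z.1 - θ u) else 0)) * x u
        else 0) := by
    intro q
    by_cases h : (u, i) = q
    · cases h
      simp [hessS, hE0]
    · simp [hessS, h, ite_mul]
  simp only [key, Finset.sum_add_distrib, Finset.sum_ite_eq, Finset.mem_univ, if_pos]
  rw [Fintype.sum_prod_type, Fintype.sum_prod_type]
  have inner1 : ∀ v : V, ∑ j : ZMod k,
      (if spinAdj k w (u, i) (v, j) then -Real.cos (θ u - θ v) * x v else 0) =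
      (if v = u then ((k : ℝ) - 1) * (-Real.cos (θ u - θ u) * x u)
       else ((w u v + w v u : ℕ) : ℝ) * (-Real.cos (θ u - θ v) * x v)) := by
    intro v
    rw [sum_spin_all k w hdiag horient hmax u v i]
    split <;> simp_all
  have inner2 : ∀ v : V, ∑ j : ZMod k,
      (if spinAdj k w (u, i) (v, j) then Real.cos (θ v - θ u) else 0) =
      (if v = u then ((k : ℝ) - 1) * Real.cos (θ u - θ u)
       else ((w u v + w v u : ℕ) : ℝ) * Real.cos (θ v - θ u)) := by
    intro v
    rw [sum_spin_all k w hdiag horient hmax u v i]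
    split <;> simp_all
  simp only [inner1, inner2]
  rw [sum_ite_pt, sum_ite_pt]
  have hRHS : ∀ v : V, hessW w θ u v * x v =
      (if v = u then (∑ z, ((w z u + w u z : ℕ) : ℝ) * Real.cos (θ z - θ u)) * x u
       else -(((w u v + w v u : ℕ) : ℝ) * Real.cos (θ u - θ v)) * x v) := by
    intro v
    by_cases h : v = u
    · subst h; simp [hessW]
    · rw [if_neg h]
      simp only [hessW, if_neg (show ¬ u = v from fun hh => h hh.symm)]
  simp only [hRHS]
  rw [sum_ite_pt]
  have hS1 : ∑ v, ((w u v + w v u : ℕ) : ℝ) * Real.cos (θ v - θ u)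
      = ∑ z, ((w z u + w u z : ℕ) : ℝ) * Real.cos (θ z - θ u) := by
    refine Finset.sum_congr rfl fun v _ => ?_
    push_cast
    ring
  have hS2 : ∑ v, ((w u v + w v u : ℕ) : ℝ) * (-Real.cos (θ u - θ v) * x v)
      = ∑ v, -(((w u v + w v u : ℕ) : ℝ) * Real.cos (θ u - θ v)) * x v := by
    refine Finset.sum_congr rfl fun v _ => ?_
    ring
  rw [hS2, hS1]
  simp only [hAu, sub_self, Real.cos_zero]
  ring
end

section
/- Let G be a weighted graph with integer weights and θ an equilibrium of G. If k > 2 w(G), then the lifted equilibrium θ^σ on the k-spinning S_k(G) is linearly stable (the Hessian U''_{θ^σ} is positive semidefinite with kernel spanned by the all-ones vector) if and only if θ is linearly stable for G (the Hessian U''_θ is positive semidefinite with kernel spanned by the all-ones vector). -/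
open Real Finset Matrix

section lap
variable {n : Type*} [Fintype n] [DecidableEq n]

lemma lap_row_sum (A : Matrix n n ℝ) (B : n → n → ℝ)
    (hA : ∀ x y, A x y = if x = y then ∑ z, B x z else -(B x y))
    (hB0 : ∀ x, B x x = 0) (x : n) : ∑ y, A x y = 0 := by
  have h1 : ∀ y, A x y = (if x = y then ((∑ z, B x z) + B x y) else 0) - B x y := by
    intro y; rw [hA]; by_cases h : x = y
    · subst h; simp [hB0 x]
    · simp [h]
  rw [Finset.sum_congr rfl fun y _ => h1 y, Finset.sum_sub_distrib,
    Finset.sum_ite_eq univ x (fun y => (∑ z, B x z) + B x y)]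
  simp [hB0 x]

lemma lap_mulVec_const (A : Matrix n n ℝ) (B : n → n → ℝ)
    (hA : ∀ x y, A x y = if x = y then ∑ z, B x z else -(B x y))
    (hB0 : ∀ x, B x x = 0) (t : ℝ) : A.mulVec (fun _ => t) = 0 := by
  funext x
  simp only [Matrix.mulVec, dotProduct, mul_comm, ← Finset.mul_sum,
    lap_row_sum A B hA hB0 x, Pi.zero_apply, mul_zero]

lemma lap_quadForm (A : Matrix n n ℝ) (B : n → n → ℝ)
    (hA : ∀ x y, A x y = if x = y then ∑ z, B x z else -(B x y))
    (hB0 : ∀ x, B x x = 0) (hBs : ∀ x y, B x y = B y x) (y : n → ℝ) :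
    y ⬝ᵥ A.mulVec y = (1/2) * ∑ x, ∑ z, B x z * (y x - y z) ^ 2 := by
  have hsplit : ∀ x, ∑ z, A x z * y z
      = (∑ z, B x z) * y x - ∑ z, B x z * y z := by
    intro x
    have h1 : ∀ z, A x z * y z
        = (if x = z then ((∑ w, B x w) + B x z) * y z else 0) - B x z * y z := by
      intro z; rw [hA]; by_cases h : x = z
      · subst h; simp [hB0 x]
      · simp [h]
    rw [Finset.sum_congr rfl fun z _ => h1 z, Finset.sum_sub_distrib,
      Finset.sum_ite_eq univ x (fun z => ((∑ w, B x w) + B x z) * y z)]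
    simp [hB0 x]
  have lhs_eq : y ⬝ᵥ A.mulVec y
      = (∑ x, ∑ z, B x z * y x * y x) - ∑ x, ∑ z, B x z * y x * y z := by
    simp only [dotProduct, Matrix.mulVec]
    rw [← Finset.sum_sub_distrib]
    refine Finset.sum_congr rfl fun x _ => ?_
    rw [hsplit x, mul_sub]
    congr 1
    · rw [show y x * ((∑ z, B x z) * y x) = (∑ z, B x z) * (y x * y x) by ring,
        Finset.sum_mul]
      exact Finset.sum_congr rfl fun z _ => (mul_assoc _ _ _).symm
    · rw [Finset.mul_sum]
      exact Finset.sum_congr rfl fun z _ => by ring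
  have e2 : ∑ x, ∑ z, B x z * y z * y z = ∑ x, ∑ z, B x z * y x * y x := by
    rw [Finset.sum_comm]
    exact Finset.sum_congr rfl fun x _ => Finset.sum_congr rfl fun z _ => by rw [hBs]
  have e3 : ∑ x, ∑ z, B x z * (y x - y z) ^ 2
      = (∑ x, ∑ z, B x z * y x * y x) + (∑ x, ∑ z, B x z * y z * y z)
        - 2 * ∑ x, ∑ z, B x z * y x * y z := by
    rw [Finset.mul_sum, ← Finset.sum_add_distrib, ← Finset.sum_sub_distrib]
    refine Finset.sum_congr rfl fun x _ => ?_
    rw [Finset.mul_sum, ← Finset.sum_add_distrib, ← Finset.sum_sub_distrib]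
    exact Finset.sum_congr rfl fun z _ => by ring
  rw [lhs_eq, e3, e2]; ring

end lap

section count
variable (k : ℕ) [NeZero k]

lemma zmod_count_val_lt (a : ℕ) (ha : a ≤ k) :
    ∑ d : ZMod k, (if d.val < a then (1:ℝ) else 0) = a := by
  rw [Finset.sum_boole]
  congr 1
  have : (univ.filter (fun d : ZMod k => d.val < a)).card
      = (Finset.range a).card := by
    apply Finset.card_bij (fun d _ => d.val)
    · intro d hd; simp only [Finset.mem_filter] at hd; exact Finset.mem_range.2 hd.2
    · intro d₁ h₁ d₂ h₂ h; exact ZMod.val_injective k h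
    · intro m hm
      refine ⟨(m : ZMod k), ?_, ?_⟩
      · simp only [Finset.mem_filter, Finset.mem_univ, true_and]
        rw [ZMod.val_cast_of_lt (lt_of_lt_of_le (Finset.mem_range.1 hm) ha)]
        exact Finset.mem_range.1 hm
      · exact ZMod.val_cast_of_lt (lt_of_lt_of_le (Finset.mem_range.1 hm) ha)
  rw [this, Finset.card_range]

lemma zmod_count_adj (a b : ℕ) (ha : a ≤ k) (hb : b ≤ k) (hab : a = 0 ∨ b = 0) (i : ZMod k) :
    ∑ j : ZMod k, (if ((j - i).val < a ∨ (i - j).val < b) then (1:ℝ) else 0)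
      = ((a + b : ℕ) : ℝ) := by
  rcases hab with h | h
  · subst h
    have : ∀ j : ZMod k, (if ((j - i).val < 0 ∨ (i - j).val < b) then (1:ℝ) else 0)
        = (fun d : ZMod k => if d.val < b then (1:ℝ) else 0) (Equiv.subLeft i j) := by
      intro j; by_cases h : (i - j).val < b <;> simp [Equiv.subLeft, h]
    rw [Finset.sum_congr rfl fun j _ => this j, Equiv.sum_comp (Equiv.subLeft i) (fun d : ZMod k => if d.val < b then (1:ℝ) else 0),
      zmod_count_val_lt k b hb]
    simp
  · subst h
    have : ∀ j : ZMod k, (if ((j - i).val < a ∨ (i - j).val < 0) then (1:ℝ) else 0)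
        = (fun d : ZMod k => if d.val < a then (1:ℝ) else 0) (Equiv.subRight i j) := by
      intro j; by_cases h : (j - i).val < a <;> simp [Equiv.subRight, h]
    rw [Finset.sum_congr rfl fun j _ => this j, Equiv.sum_comp (Equiv.subRight i) (fun d : ZMod k => if d.val < a then (1:ℝ) else 0),
      zmod_count_val_lt k a ha]
    simp

lemma zmod_count_adj' (a b : ℕ) (ha : a ≤ k) (hb : b ≤ k) (hab : a = 0 ∨ b = 0) (i : ZMod k)
    (c : ℝ) :
    ∑ j : ZMod k, (if ((j - i).val < a ∨ (i - j).val < b) then c else 0)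
      = ((a + b : ℕ) : ℝ) * c := by
  have : ∀ j : ZMod k, (if ((j - i).val < a ∨ (i - j).val < b) then c else 0)
      = (if ((j - i).val < a ∨ (i - j).val < b) then (1:ℝ) else 0) * c := by
    intro j; by_cases h : ((j - i).val < a ∨ (i - j).val < b) <;> simp [h]
  rw [Finset.sum_congr rfl fun j _ => this j, ← Finset.sum_mul, zmod_count_adj k a b ha hb hab i]

end count

section bridge
variable {V : Type*} [Fintype V] [DecidableEq V] (k : ℕ) [NeZero k]
  (w : V → V → ℕ) (θ : V → ℝ)

noncomputable def BS : (V × ZMod k) → (V × ZMod k) → ℝ :=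
  fun x y => if spinAdj k w x y then Real.cos (θ x.1 - θ y.1) else 0

noncomputable def BW : V → V → ℝ :=
  fun u v => ((w u v + w v u : ℕ) : ℝ) * Real.cos (θ u - θ v)

set_option linter.unusedSectionVars false in
lemma spinAdj_symm (x y : V × ZMod k) : spinAdj k w x y ↔ spinAdj k w y x := by
  unfold spinAdj
  constructor <;> rintro (h | h | ⟨h1, h2⟩)
  · exact Or.inr (Or.inl h)
  · exact Or.inl h
  · exact Or.inr (Or.inr ⟨h1.symm, h2.symm⟩)
  · exact Or.inr (Or.inl h)
  · exact Or.inl h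
  · exact Or.inr (Or.inr ⟨h1.symm, h2.symm⟩)

set_option linter.unusedSectionVars false

lemma spinAdj_irrefl (hdiag : ∀ v, w v v = 0) (x : V × ZMod k) : ¬ spinAdj k w x x := by
  unfold spinAdj
  simp [hdiag x.1]

lemma spinAdj_same (hdiag : ∀ v, w v v = 0) (u : V) (i j : ZMod k) : spinAdj k w (u, i) (u, j) ↔ i ≠ j := by
  unfold spinAdj
  simp [hdiag u]

lemma spinAdj_ne {u v : V} (h : u ≠ v) (i j : ZMod k) :
    spinAdj k w (u, i) (v, j) ↔ ((j - i).val < w u v ∨ (i - j).val < w v u) := by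
  unfold spinAdj
  simp [h]

lemma BS_symm (x y : V × ZMod k) : BS k w θ x y = BS k w θ y x := by
  unfold BS
  rw [show θ x.1 - θ y.1 = -(θ y.1 - θ x.1) by ring, Real.cos_neg]
  by_cases h : spinAdj k w x y
  · rw [if_pos h, if_pos ((spinAdj_symm k w x y).1 h)]
  · rw [if_neg h, if_neg (fun hc => h ((spinAdj_symm k w y x).1 hc))]

lemma BS_diag (hdiag : ∀ v, w v v = 0) (x : V × ZMod k) : BS k w θ x x = 0 := by
  unfold BS; rw [if_neg (spinAdj_irrefl k w hdiag x)]

lemma hessS_eq (x y : V × ZMod k) :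
    hessS k w θ x y = if x = y then ∑ z, BS k w θ x z else -(BS k w θ x y) := by
  unfold hessS
  by_cases h : x = y
  · rw [if_pos h, if_pos h]
    refine Finset.sum_congr rfl fun z _ => ?_
    unfold BS
    rw [show θ z.1 - θ x.1 = -(θ x.1 - θ z.1) by ring, Real.cos_neg]
  · rw [if_neg h, if_neg h]
    unfold BS
    by_cases ha : spinAdj k w x y <;> simp [ha]

lemma BW_symm (u v : V) : BW w θ u v = BW w θ v u := by
  unfold BW
  rw [show θ u - θ v = -(θ v - θ u) by ring, Real.cos_neg, add_comm (w u v)]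

lemma BW_diag (hdiag : ∀ v, w v v = 0) (u : V) : BW w θ u u = 0 := by
  unfold BW; simp [hdiag u]

lemma hessW_eq (u v : V) :
    hessW w θ u v = if u = v then ∑ z, BW w θ u z else -(BW w θ u v) := by
  unfold hessW
  by_cases h : u = v
  · rw [if_pos h, if_pos h]; subst h
    refine Finset.sum_congr rfl fun z _ => ?_
    unfold BW
    rw [show θ z - θ u = -(θ u - θ z) by ring, Real.cos_neg, add_comm (w z u)]
  · rw [if_neg h, if_neg h]; rfl

end bridge

lemma sq_sum_pairs {ι : Type*} [Fintype ι] (f : ι → ℝ) (hf : ∑ i, f i = 0) :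
    ∑ i, ∑ j, (f i - f j) ^ 2 = 2 * (Fintype.card ι) * ∑ i, f i ^ 2 := by
  have e : ∀ i j : ι, (f i - f j)^2 = f i^2 + f j^2 - 2*(f i * f j) := fun i j => by ring
  have h1 : ∀ i, ∑ j, (f i - f j)^2
      = (Fintype.card ι) * f i^2 + (∑ j, f j^2) - 2*(f i * ∑ j, f j) := by
    intro i
    rw [Finset.sum_congr rfl fun j _ => e i j, Finset.sum_sub_distrib,
      Finset.sum_add_distrib, Finset.sum_const, Finset.card_univ, nsmul_eq_mul,
      ← Finset.mul_sum, ← Finset.mul_sum]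
  rw [Finset.sum_congr rfl fun i _ => h1 i]
  rw [Finset.sum_sub_distrib, Finset.sum_add_distrib]
  simp only [hf, mul_zero, Finset.sum_const_zero, Finset.sum_const, Finset.card_univ,
    nsmul_eq_mul, ← Finset.mul_sum]
  ring

section pairs
set_option linter.unusedSectionVars false
variable {V : Type*} [Fintype V] [DecidableEq V] (k : ℕ) [NeZero k]
  (w : V → V → ℕ) (θ : V → ℝ) (y : V × ZMod k → ℝ) (z : V → ℝ) (r : V × ZMod k → ℝ)

lemma pair_diag (hdiag : ∀ v, w v v = 0)
    (hy : ∀ x : V × ZMod k, y x = z x.1 + r x) (hr : ∀ u, ∑ i : ZMod k, r (u, i) = 0)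
    (u : V) :
    ∑ i : ZMod k, ∑ j : ZMod k, BS k w θ (u, i) (u, j) * (y (u, i) - y (u, j)) ^ 2
      = 2 * (k : ℝ) * ∑ i : ZMod k, r (u, i) ^ 2 := by
  have he : ∀ i j : ZMod k, BS k w θ (u, i) (u, j) * (y (u, i) - y (u, j)) ^ 2
      = ((fun i => r (u, i)) i - (fun i => r (u, i)) j) ^ 2 := by
    intro i j
    simp only [BS]
    by_cases h : i = j
    · subst h
      rw [if_neg (spinAdj_irrefl k w hdiag (u, i))]
      simp
    · rw [if_pos ((spinAdj_same k w hdiag u i j).2 h)]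
      simp only [hy (u, i), hy (u, j)]
      simp only [sub_self, Real.cos_zero, one_mul]
      ring
  rw [Finset.sum_congr rfl fun i _ => Finset.sum_congr rfl fun j _ => he i j,
    sq_sum_pairs (fun i => r (u, i)) (hr u), ZMod.card k]

end pairs

section pairs2
set_option linter.unusedSectionVars false
variable {V : Type*} [Fintype V] [DecidableEq V] (k : ℕ) [NeZero k]
  (w : V → V → ℕ) (θ : V → ℝ) (y : V × ZMod k → ℝ) (z : V → ℝ) (r : V × ZMod k → ℝ)

lemma zmod_count_adj'' (a b : ℕ) (ha : a ≤ k) (hb : b ≤ k) (hab : a = 0 ∨ b = 0)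
    (j : ZMod k) (c : ℝ) :
    ∑ i : ZMod k, (if ((j - i).val < a ∨ (i - j).val < b) then c else 0)
      = ((a + b : ℕ) : ℝ) * c := by
  have h : ∀ i : ZMod k, ((j - i).val < a ∨ (i - j).val < b)
      ↔ ((i - j).val < b ∨ (j - i).val < a) := fun i => or_comm
  simp only [h]
  rw [zmod_count_adj' k b a hb ha hab.symm j c, Nat.add_comm]

lemma pair_offdiag (horient : ∀ u v, w u v = 0 ∨ w v u = 0) (hmax : ∀ u v, w u v ≤ k)
    (hy : ∀ x : V × ZMod k, y x = z x.1 + r x) (hr : ∀ u, ∑ i : ZMod k, r (u, i) = 0)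
    {u v : V} (huv : u ≠ v) :
    ∑ i : ZMod k, ∑ j : ZMod k, BS k w θ (u, i) (v, j) * (y (u, i) - y (v, j)) ^ 2
      = Real.cos (θ u - θ v) *
        ((k : ℝ) * ((w u v + w v u : ℕ) : ℝ) * (z u - z v) ^ 2
          + ∑ i : ZMod k, ∑ j : ZMod k,
              (if spinAdj k w (u, i) (v, j) then (r (u, i) - r (v, j)) ^ 2 else 0)) := by
  have hcond := spinAdj_ne k w huv
  simp only [BS, hcond]
  -- notation
  set c := Real.cos (θ u - θ v) with hc
  set m : ℝ := ((w u v + w v u : ℕ) : ℝ) with hm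
  have step1 : ∀ i j : ZMod k,
      (if ((j - i).val < w u v ∨ (i - j).val < w v u) then c else 0) * (y (u, i) - y (v, j)) ^ 2
      = c * (if ((j - i).val < w u v ∨ (i - j).val < w v u)
              then (y (u, i) - y (v, j)) ^ 2 else 0) := by
    intro i j
    by_cases h : ((j - i).val < w u v ∨ (i - j).val < w v u) <;> simp [h]
  have step2 : ∀ i j : ZMod k,
      (if ((j - i).val < w u v ∨ (i - j).val < w v u)
        then (y (u, i) - y (v, j)) ^ 2 else 0)
      = (if ((j - i).val < w u v ∨ (i - j).val < w v u) then (z u - z v) ^ 2 else 0)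
        + ((2 * (z u - z v)) * (if ((j - i).val < w u v ∨ (i - j).val < w v u)
            then r (u, i) else 0)
          - (2 * (z u - z v)) * (if ((j - i).val < w u v ∨ (i - j).val < w v u)
            then r (v, j) else 0)
          + (if ((j - i).val < w u v ∨ (i - j).val < w v u)
              then (r (u, i) - r (v, j)) ^ 2 else 0)) := by
    intro i j
    by_cases h : ((j - i).val < w u v ∨ (i - j).val < w v u)
    · simp only [if_pos h, hy (u, i), hy (v, j)]
      ring
    · simp [h]
  have sum1 : ∑ i : ZMod k, ∑ j : ZMod k,
      (if ((j - i).val < w u v ∨ (i - j).val < w v u) then (z u - z v) ^ 2 else 0)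
      = (k : ℝ) * m * (z u - z v) ^ 2 := by
    rw [Finset.sum_congr rfl fun i _ =>
      zmod_count_adj' k (w u v) (w v u) (hmax u v) (hmax v u) (horient u v) i ((z u - z v) ^ 2)]
    rw [Finset.sum_const, Finset.card_univ, ZMod.card k, nsmul_eq_mul]
    ring
  have sum2 : ∑ i : ZMod k, ∑ j : ZMod k,
      (2 * (z u - z v)) * (if ((j - i).val < w u v ∨ (i - j).val < w v u) then r (u, i) else 0)
      = 0 := by
    have : ∀ i : ZMod k, ∑ j : ZMod k,
        (2 * (z u - z v)) * (if ((j - i).val < w u v ∨ (i - j).val < w v u) then r (u, i) else 0)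
        = (2 * (z u - z v) * m) * r (u, i) := by
      intro i
      rw [← Finset.mul_sum,
        zmod_count_adj' k (w u v) (w v u) (hmax u v) (hmax v u) (horient u v) i (r (u, i))]
      ring
    rw [Finset.sum_congr rfl fun i _ => this i, ← Finset.mul_sum, hr u, mul_zero]
  have sum3 : ∑ i : ZMod k, ∑ j : ZMod k,
      (2 * (z u - z v)) * (if ((j - i).val < w u v ∨ (i - j).val < w v u) then r (v, j) else 0)
      = 0 := by
    rw [Finset.sum_comm]
    have : ∀ j : ZMod k, ∑ i : ZMod k,
        (2 * (z u - z v)) * (if ((j - i).val < w u v ∨ (i - j).val < w v u) then r (v, j) else 0)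
        = (2 * (z u - z v) * m) * r (v, j) := by
      intro j
      rw [← Finset.mul_sum,
        zmod_count_adj'' k (w u v) (w v u) (hmax u v) (hmax v u) (horient u v) j (r (v, j))]
      ring
    rw [Finset.sum_congr rfl fun j _ => this j, ← Finset.mul_sum, hr v, mul_zero]
  calc ∑ i : ZMod k, ∑ j : ZMod k,
      (if ((j - i).val < w u v ∨ (i - j).val < w v u) then c else 0) * (y (u, i) - y (v, j)) ^ 2
      = c * ∑ i : ZMod k, ∑ j : ZMod k,
        (if ((j - i).val < w u v ∨ (i - j).val < w v u)
          then (y (u, i) - y (v, j)) ^ 2 else 0) := by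
        rw [Finset.mul_sum]
        refine Finset.sum_congr rfl fun i _ => ?_
        rw [Finset.mul_sum]
        exact Finset.sum_congr rfl fun j _ => step1 i j
    _ = c * ((k : ℝ) * m * (z u - z v) ^ 2
          + ∑ i : ZMod k, ∑ j : ZMod k,
            (if ((j - i).val < w u v ∨ (i - j).val < w v u)
              then (r (u, i) - r (v, j)) ^ 2 else 0)) := by
        congr 1
        rw [Finset.sum_congr rfl fun i _ => Finset.sum_congr rfl fun j _ => step2 i j]
        simp only [Finset.sum_add_distrib, Finset.sum_sub_distrib]
        rw [sum1, sum2, sum3]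
        ring

end pairs2

section pairs3
set_option linter.unusedSectionVars false
variable {V : Type*} [Fintype V] [DecidableEq V] (k : ℕ) [NeZero k]
  (w : V → V → ℕ) (θ : V → ℝ) (r : V × ZMod k → ℝ)

lemma pair_bound (horient : ∀ u v, w u v = 0 ∨ w v u = 0) (hmax : ∀ u v, w u v ≤ k)
    {u v : V} (huv : u ≠ v) :
    |Real.cos (θ u - θ v) * ∑ i : ZMod k, ∑ j : ZMod k,
        (if spinAdj k w (u, i) (v, j) then (r (u, i) - r (v, j)) ^ 2 else 0)|
      ≤ 2 * ((w u v + w v u : ℕ) : ℝ) * ∑ x : V × ZMod k, r x ^ 2 := by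
  have hcond := spinAdj_ne k w huv
  simp only [hcond]
  set S := ∑ i : ZMod k, ∑ j : ZMod k,
    (if ((j - i).val < w u v ∨ (i - j).val < w v u) then (r (u, i) - r (v, j)) ^ 2 else 0)
    with hS
  have hS0 : 0 ≤ S := by
    refine Finset.sum_nonneg fun i _ => Finset.sum_nonneg fun j _ => ?_
    by_cases h : ((j - i).val < w u v ∨ (i - j).val < w v u) <;> simp [h, sq_nonneg]
  have habs : |Real.cos (θ u - θ v) * S| ≤ S := by
    rw [abs_mul]
    calc |Real.cos (θ u - θ v)| * |S| ≤ 1 * |S| :=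
          mul_le_mul_of_nonneg_right (Real.abs_cos_le_one _) (abs_nonneg _)
      _ = S := by rw [one_mul, abs_of_nonneg hS0]
  refine habs.trans ?_
  have hSle : S ≤ 2 * ((w u v + w v u : ℕ) : ℝ) * (∑ i : ZMod k, r (u, i) ^ 2)
      + 2 * ((w u v + w v u : ℕ) : ℝ) * (∑ j : ZMod k, r (v, j) ^ 2) := by
    have step : ∀ i j : ZMod k,
        (if ((j - i).val < w u v ∨ (i - j).val < w v u) then (r (u, i) - r (v, j)) ^ 2 else 0)
        ≤ 2 * (if ((j - i).val < w u v ∨ (i - j).val < w v u) then r (u, i) ^ 2 else 0)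
          + 2 * (if ((j - i).val < w u v ∨ (i - j).val < w v u) then r (v, j) ^ 2 else 0) := by
      intro i j
      by_cases h : ((j - i).val < w u v ∨ (i - j).val < w v u)
      · simp only [if_pos h]; nlinarith [sq_nonneg (r (u, i) + r (v, j))]
      · simp [h]
    have h1 : ∑ i : ZMod k, ∑ j : ZMod k,
        2 * (if ((j - i).val < w u v ∨ (i - j).val < w v u) then r (u, i) ^ 2 else 0)
        = 2 * ((w u v + w v u : ℕ) : ℝ) * (∑ i : ZMod k, r (u, i) ^ 2) := by
      have : ∀ i : ZMod k, ∑ j : ZMod k,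
          2 * (if ((j - i).val < w u v ∨ (i - j).val < w v u) then r (u, i) ^ 2 else 0)
          = 2 * ((w u v + w v u : ℕ) : ℝ) * r (u, i) ^ 2 := by
        intro i
        rw [← Finset.mul_sum,
          zmod_count_adj' k (w u v) (w v u) (hmax u v) (hmax v u) (horient u v) i (r (u, i) ^ 2)]
        ring
      rw [Finset.sum_congr rfl fun i _ => this i, ← Finset.mul_sum]
    have h2 : ∑ i : ZMod k, ∑ j : ZMod k,
        2 * (if ((j - i).val < w u v ∨ (i - j).val < w v u) then r (v, j) ^ 2 else 0)
        = 2 * ((w u v + w v u : ℕ) : ℝ) * (∑ j : ZMod k, r (v, j) ^ 2) := by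
      rw [Finset.sum_comm]
      have : ∀ j : ZMod k, ∑ i : ZMod k,
          2 * (if ((j - i).val < w u v ∨ (i - j).val < w v u) then r (v, j) ^ 2 else 0)
          = 2 * ((w u v + w v u : ℕ) : ℝ) * r (v, j) ^ 2 := by
        intro j
        rw [← Finset.mul_sum,
          zmod_count_adj'' k (w u v) (w v u) (hmax u v) (hmax v u) (horient u v) j (r (v, j) ^ 2)]
        ring
      rw [Finset.sum_congr rfl fun j _ => this j, ← Finset.mul_sum]
    calc S ≤ ∑ i : ZMod k, ∑ j : ZMod k,
        (2 * (if ((j - i).val < w u v ∨ (i - j).val < w v u) then r (u, i) ^ 2 else 0)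
          + 2 * (if ((j - i).val < w u v ∨ (i - j).val < w v u) then r (v, j) ^ 2 else 0)) := by
          refine Finset.sum_le_sum fun i _ => Finset.sum_le_sum fun j _ => step i j
      _ = 2 * ((w u v + w v u : ℕ) : ℝ) * (∑ i : ZMod k, r (u, i) ^ 2)
          + 2 * ((w u v + w v u : ℕ) : ℝ) * (∑ j : ZMod k, r (v, j) ^ 2) := by
          simp only [Finset.sum_add_distrib]
          rw [h1, h2]
  refine hSle.trans ?_
  have hfib : (∑ i : ZMod k, r (u, i) ^ 2) + (∑ j : ZMod k, r (v, j) ^ 2)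
      ≤ ∑ x : V × ZMod k, r x ^ 2 := by
    rw [Fintype.sum_prod_type]
    have := Finset.sum_le_sum_of_subset_of_nonneg
      (f := fun a => ∑ i : ZMod k, r (a, i) ^ 2)
      (Finset.subset_univ ({u, v} : Finset V))
      (fun a _ _ => Finset.sum_nonneg fun i _ => sq_nonneg (r (a, i)))
    rw [Finset.sum_pair huv] at this
    exact this
  nlinarith [Nat.cast_nonneg (α := ℝ) (w u v + w v u)]

end pairs3

section master
set_option linter.unusedSectionVars false
variable {V : Type*} [Fintype V] [DecidableEq V] (k : ℕ) [NeZero k]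
  (w : V → V → ℕ) (θ : V → ℝ)

lemma master (hdiag : ∀ v, w v v = 0) (horient : ∀ u v, w u v = 0 ∨ w v u = 0)
    (hmax : ∀ u v, w u v ≤ k)
    (y : V × ZMod k → ℝ) (z : V → ℝ) (r : V × ZMod k → ℝ)
    (hy : ∀ x : V × ZMod k, y x = z x.1 + r x) (hr : ∀ u, ∑ i : ZMod k, r (u, i) = 0) :
    ∃ F : ℝ,
      (∑ x : V × ZMod k, ∑ x' : V × ZMod k, BS k w θ x x' * (y x - y x') ^ 2)
        = (k : ℝ) * (∑ u, ∑ v, BW w θ u v * (z u - z v) ^ 2)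
          + 2 * (k : ℝ) * (∑ x : V × ZMod k, r x ^ 2) + F
      ∧ |F| ≤ 4 * (∑ u, ∑ v, (w u v : ℝ)) * (∑ x : V × ZMod k, r x ^ 2) := by
  set R := ∑ x : V × ZMod k, r x ^ 2 with hR
  clear_value R
  set S : V → V → ℝ := fun u v => ∑ i : ZMod k, ∑ j : ZMod k,
    (if spinAdj k w (u, i) (v, j) then (r (u, i) - r (v, j)) ^ 2 else 0) with hSdef
  clear_value S
  refine ⟨∑ u, ∑ v, (if u = v then 0 else Real.cos (θ u - θ v) * S u v), ?_, ?_⟩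
  · have reorder : (∑ x : V × ZMod k, ∑ x' : V × ZMod k, BS k w θ x x' * (y x - y x') ^ 2)
        = ∑ u, ∑ v, ∑ i : ZMod k, ∑ j : ZMod k,
            BS k w θ (u, i) (v, j) * (y (u, i) - y (v, j)) ^ 2 := by
      rw [Fintype.sum_prod_type]
      refine Finset.sum_congr rfl fun u _ => ?_
      rw [Finset.sum_congr rfl fun i (_ : i ∈ univ) => Fintype.sum_prod_type
        (f := fun x' : V × ZMod k => BS k w θ (u, i) x' * (y (u, i) - y x') ^ 2)]
      exact Finset.sum_comm
    have key : ∀ u v, (∑ i : ZMod k, ∑ j : ZMod k,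
          BS k w θ (u, i) (v, j) * (y (u, i) - y (v, j)) ^ 2)
        = (k : ℝ) * (BW w θ u v * (z u - z v) ^ 2)
          + (if u = v then 2 * (k : ℝ) * ∑ i : ZMod k, r (u, i) ^ 2
             else Real.cos (θ u - θ v) * S u v) := by
      intro u v
      by_cases h : u = v
      · subst h
        rw [pair_diag k w θ y z r hdiag hy hr u, if_pos rfl]
        simp [BW_diag w θ hdiag u]
      · rw [pair_offdiag k w θ y z r horient hmax hy hr h, if_neg h]
        have : BW w θ u v = ((w u v + w v u : ℕ) : ℝ) * Real.cos (θ u - θ v) := rfl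
        rw [this]
        simp only [hSdef]
        ring
    rw [reorder, Finset.sum_congr rfl fun u _ => Finset.sum_congr rfl fun v _ => key u v]
    simp only [Finset.sum_add_distrib]
    have p1 : ∑ u, ∑ v, (k : ℝ) * (BW w θ u v * (z u - z v) ^ 2)
        = (k : ℝ) * ∑ u, ∑ v, BW w θ u v * (z u - z v) ^ 2 := by
      rw [Finset.mul_sum]
      exact Finset.sum_congr rfl fun u _ => (Finset.mul_sum _ _ _).symm
    have p2 : ∑ u, ∑ v, (if u = v then 2 * (k : ℝ) * ∑ i : ZMod k, r (u, i) ^ 2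
          else Real.cos (θ u - θ v) * S u v)
        = 2 * (k : ℝ) * R
          + ∑ u, ∑ v, (if u = v then 0 else Real.cos (θ u - θ v) * S u v) := by
      have split : ∀ u v : V, (if u = v then 2 * (k : ℝ) * ∑ i : ZMod k, r (u, i) ^ 2
            else Real.cos (θ u - θ v) * S u v)
          = (if u = v then 2 * (k : ℝ) * ∑ i : ZMod k, r (u, i) ^ 2 else 0)
            + (if u = v then 0 else Real.cos (θ u - θ v) * S u v) := by
        intro u v; by_cases h : u = v <;> simp [h]
      rw [Finset.sum_congr rfl fun u _ => Finset.sum_congr rfl fun v _ => split u v]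
      simp only [Finset.sum_add_distrib]
      congr 1
      have e1 : ∀ u : V, ∑ v, (if u = v then 2 * (k : ℝ) * ∑ i : ZMod k, r (u, i) ^ 2 else 0)
          = 2 * (k : ℝ) * ∑ i : ZMod k, r (u, i) ^ 2 := by
        intro u
        rw [Finset.sum_ite_eq univ u (fun _ => 2 * (k : ℝ) * ∑ i : ZMod k, r (u, i) ^ 2)]
        simp
      rw [Finset.sum_congr rfl fun u _ => e1 u, hR, Fintype.sum_prod_type, Finset.mul_sum]
    rw [p1, p2]
    ring
  · calc |∑ u, ∑ v, (if u = v then 0 else Real.cos (θ u - θ v) * S u v)|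
        ≤ ∑ u, ∑ v, |if u = v then 0 else Real.cos (θ u - θ v) * S u v| := by
          refine (Finset.abs_sum_le_sum_abs _ _).trans ?_
          exact Finset.sum_le_sum fun u _ => Finset.abs_sum_le_sum_abs _ _
      _ ≤ ∑ u, ∑ v, 2 * ((w u v + w v u : ℕ) : ℝ) * R := by
          refine Finset.sum_le_sum fun u _ => Finset.sum_le_sum fun v _ => ?_
          by_cases h : u = v
          · rw [if_pos h, abs_zero]
            have : (0:ℝ) ≤ R := hR ▸ Finset.sum_nonneg fun x _ => sq_nonneg (r x)
            positivity
          · rw [if_neg h]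
            simp only [hSdef]
            rw [hR]
            exact pair_bound k w θ r horient hmax h
      _ = 4 * (∑ u, ∑ v, (w u v : ℝ)) * R := by
          have cs : ∀ u v : V, 2 * ((w u v + w v u : ℕ) : ℝ) * R
              = 2 * R * (w u v : ℝ) + 2 * R * (w v u : ℝ) := by
            intro u v; push_cast; ring
          rw [Finset.sum_congr rfl fun u _ => Finset.sum_congr rfl fun v _ => cs u v]
          simp only [Finset.sum_add_distrib]
          have e1 : ∑ u, ∑ v, 2 * R * (w u v : ℝ) = 2 * R * ∑ u, ∑ v, (w u v : ℝ) := by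
            rw [Finset.mul_sum]
            exact Finset.sum_congr rfl fun u _ => (Finset.mul_sum _ _ _).symm
          have e2 : ∑ u, ∑ v, 2 * R * (w v u : ℝ) = 2 * R * ∑ u, ∑ v, (w u v : ℝ) := by
            rw [Finset.sum_comm, Finset.mul_sum]
            exact Finset.sum_congr rfl fun u _ => (Finset.mul_sum _ _ _).symm
          rw [e1, e2]
          ring

end master

/-- If `k > 2 w(G)`, the lifted equilibrium `θ^σ` of the `k`-spinning is linearly
stable (Hessian positive semidefinite with kernel spanned by the all-ones vector)
iff the equilibrium `θ` of `G` is linearly stable. -/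
theorem spinning_stability_iff {V : Type*} [Fintype V] [DecidableEq V]
    (w : V → V → ℕ) (hdiag : ∀ v, w v v = 0)
    (horient : ∀ u v, w u v = 0 ∨ w v u = 0)
    (k : ℕ) [NeZero k] (hmax : ∀ u v, w u v ≤ k)
    (hk : 2 * (∑ u, ∑ v, w u v) < k)
    (θ : V → ℝ)
    (hequil : ∀ v, ∑ u, ((w u v + w v u : ℕ) : ℝ) * Real.sin (θ u - θ v) = 0) :
    ((hessS k w θ).PosSemidef ∧
      ∀ y : V × ZMod k → ℝ, (hessS k w θ).mulVec y = 0 ↔ ∃ t : ℝ, y = fun _ => t) ↔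
    ((hessW w θ).PosSemidef ∧
      ∀ z : V → ℝ, (hessW w θ).mulVec z = 0 ↔ ∃ t : ℝ, z = fun _ => t) := by
  classical
  -- basic facts
  have hBSl := hessS_eq k w θ
  have hBWl := hessW_eq w θ
  have hBS0 : ∀ x, BS k w θ x x = 0 := BS_diag k w θ hdiag
  have hBW0 : ∀ u, BW w θ u u = 0 := BW_diag w θ hdiag
  have hBSs := BS_symm k w θ
  have hBWs := BW_symm w θ
  have qS : ∀ yv : V × ZMod k → ℝ, yv ⬝ᵥ (hessS k w θ).mulVec yv
      = (1/2) * ∑ x, ∑ x', BS k w θ x x' * (yv x - yv x') ^ 2 :=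
    fun yv => lap_quadForm _ _ hBSl hBS0 hBSs yv
  have qW : ∀ zv : V → ℝ, zv ⬝ᵥ (hessW w θ).mulVec zv
      = (1/2) * ∑ u, ∑ v, BW w θ u v * (zv u - zv v) ^ 2 :=
    fun zv => lap_quadForm _ _ hBWl hBW0 hBWs zv
  have hermS : (hessS k w θ).IsHermitian := by
    refine Matrix.ext fun x x' => ?_
    rw [Matrix.conjTranspose_apply, star_trivial, hBSl, hBSl]
    by_cases h : x = x'
    · subst h; rfl
    · rw [if_neg h, if_neg (fun hc => h hc.symm), hBSs]
  have hermW : (hessW w θ).IsHermitian := by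
    refine Matrix.ext fun x x' => ?_
    rw [Matrix.conjTranspose_apply, star_trivial, hBWl, hBWl]
    by_cases h : x = x'
    · subst h; rfl
    · rw [if_neg h, if_neg (fun hc => h hc.symm), hBWs]
  set Wr : ℝ := ∑ u, ∑ v, (w u v : ℝ) with hWrdef
  have hWr0 : 0 ≤ Wr :=
    Finset.sum_nonneg fun u _ => Finset.sum_nonneg fun v _ => Nat.cast_nonneg _
  have hkr : 2 * Wr < (k : ℝ) := by
    have := (Nat.cast_lt (α := ℝ)).2 hk
    push_cast at this
    exact this
  have hk0 : (0:ℝ) < (k:ℝ) := lt_of_le_of_lt (by positivity) hkr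
  -- decomposition of an arbitrary vector on the spinning
  have getzr : ∀ y : V × ZMod k → ℝ, ∃ z : V → ℝ, ∃ r : V × ZMod k → ℝ,
      (∀ x, y x = z x.1 + r x) ∧ (∀ u, ∑ i : ZMod k, r (u, i) = 0) := by
    intro y
    refine ⟨fun u => (∑ i : ZMod k, y (u, i)) / k, fun x => y x - (∑ i : ZMod k, y (x.1, i)) / k,
      fun x => by ring, fun u => ?_⟩
    have hfst : ∀ x : ZMod k, (∑ i : ZMod k, y (((u, x) : V × ZMod k).1, i)) / (k:ℝ)
        = (∑ i : ZMod k, y (u, i)) / k := fun x => rfl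
    rw [Finset.sum_sub_distrib, Finset.sum_congr rfl fun x _ => hfst x, Finset.sum_const,
      Finset.card_univ, ZMod.card k, nsmul_eq_mul, mul_div_cancel₀ _ (ne_of_gt hk0), sub_self]
  constructor
  · rintro ⟨psdS, kerS⟩
    have quadW_eq : ∀ zv : V → ℝ, ∑ x : V × ZMod k, ∑ x' : V × ZMod k,
        BS k w θ x x' * ((fun x : V × ZMod k => zv x.1) x - (fun x : V × ZMod k => zv x.1) x') ^ 2
        = (k : ℝ) * ∑ u, ∑ v, BW w θ u v * (zv u - zv v) ^ 2 := by
      intro zv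
      obtain ⟨F, hFeq, hFle⟩ := master k w θ hdiag horient hmax
        (fun x : V × ZMod k => zv x.1) zv (fun _ => 0)
        (fun x => (add_zero _).symm) (fun u => by simp)
      have hrz : (∑ x : V × ZMod k, ((fun _ : V × ZMod k => (0:ℝ)) x) ^ 2) = 0 := by simp
      rw [hrz, mul_zero, add_zero] at hFeq
      rw [hrz, mul_zero] at hFle
      have hF0 : F = 0 := by
        have := abs_nonneg F
        have h2 : |F| ≤ 0 := by simpa using hFle
        have : |F| = 0 := le_antisymm h2 (abs_nonneg F)
        exact abs_eq_zero.1 this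
      rw [hF0, add_zero] at hFeq
      exact hFeq
    have psdW : (hessW w θ).PosSemidef := by
      refine Matrix.PosSemidef.of_dotProduct_mulVec_nonneg hermW fun zv => ?_
      rw [star_trivial, qW]
      have h1 := psdS.dotProduct_mulVec_nonneg (fun x : V × ZMod k => zv x.1)
      rw [star_trivial, qS] at h1
      rw [quadW_eq zv] at h1
      nlinarith
    refine ⟨psdW, fun zv => ⟨fun h0 => ?_, fun ⟨t, ht⟩ => ht ▸ lap_mulVec_const _ _ hBWl hBW0 t⟩⟩
    · -- hessW z = 0 → z const
      have hq : (fun x : V × ZMod k => zv x.1) ⬝ᵥ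
          (hessS k w θ).mulVec (fun x : V × ZMod k => zv x.1) = 0 := by
        rw [qS, quadW_eq zv]
        have : ∑ u, ∑ v, BW w θ u v * (zv u - zv v) ^ 2 = 0 := by
          have hqW := qW zv
          rw [h0, dotProduct_zero] at hqW
          linarith
        rw [this, mul_zero, mul_zero]
      have hker : (hessS k w θ).mulVec (fun x : V × ZMod k => zv x.1) = 0 := by
        have := (psdS.dotProduct_mulVec_zero_iff (fun x : V × ZMod k => zv x.1))
        rw [star_trivial] at this
        exact this.1 hq
      obtain ⟨t, ht⟩ := (kerS _).1 hker
      exact ⟨t, funext fun u => congrFun ht (u, (0 : ZMod k))⟩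
  · rintro ⟨psdW, kerW⟩
    have key : ∀ y : V × ZMod k → ℝ, ∀ z : V → ℝ, ∀ r : V × ZMod k → ℝ,
        (∀ x, y x = z x.1 + r x) → (∀ u, ∑ i : ZMod k, r (u, i) = 0) →
        (k : ℝ) * ∑ u, ∑ v, BW w θ u v * (z u - z v) ^ 2
            + 2 * ((k:ℝ) - 2 * Wr) * ∑ x : V × ZMod k, r x ^ 2
          ≤ ∑ x : V × ZMod k, ∑ x' : V × ZMod k, BS k w θ x x' * (y x - y x') ^ 2 := by
      intro y z r hy hr
      obtain ⟨F, hFeq, hFle⟩ := master k w θ hdiag horient hmax y z r hy hr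
      have hW : (∑ u, ∑ v, ((w u v : ℕ):ℝ)) = Wr := rfl
      rw [hW] at hFle
      have := (abs_le.1 hFle).1
      rw [hFeq]
      linarith
    have psdS : (hessS k w θ).PosSemidef := by
      refine Matrix.PosSemidef.of_dotProduct_mulVec_nonneg hermS fun y => ?_
      rw [star_trivial, qS]
      obtain ⟨z, r, hy, hr⟩ := getzr y
      have h1 := key y z r hy hr
      have h2 : 0 ≤ ∑ u, ∑ v, BW w θ u v * (z u - z v) ^ 2 := by
        have := psdW.dotProduct_mulVec_nonneg z
        rw [star_trivial, qW] at this
        linarith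
      have h3 : 0 ≤ ∑ x : V × ZMod k, r x ^ 2 :=
        Finset.sum_nonneg fun x _ => sq_nonneg (r x)
      nlinarith
    refine ⟨psdS, fun y => ⟨fun h0 => ?_, fun ⟨t, ht⟩ => ht ▸ lap_mulVec_const _ _ hBSl hBS0 t⟩⟩
    obtain ⟨z, r, hy, hr⟩ := getzr y
    obtain ⟨F, hFeq, hFle⟩ := master k w θ hdiag horient hmax y z r hy hr
    have hW : (∑ u, ∑ v, ((w u v : ℕ):ℝ)) = Wr := rfl
    rw [hW] at hFle
    have hquad0 : ∑ x : V × ZMod k, ∑ x' : V × ZMod k, BS k w θ x x' * (y x - y x') ^ 2 = 0 := by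
      have := qS y
      rw [h0, dotProduct_zero] at this
      linarith
    have hQW : 0 ≤ ∑ u, ∑ v, BW w θ u v * (z u - z v) ^ 2 := by
      have := psdW.dotProduct_mulVec_nonneg z
      rw [star_trivial, qW] at this
      linarith
    have hR0 : 0 ≤ ∑ x : V × ZMod k, r x ^ 2 :=
      Finset.sum_nonneg fun x _ => sq_nonneg (r x)
    have hFlow := (abs_le.1 hFle).1
    have hRzero : ∑ x : V × ZMod k, r x ^ 2 = 0 := by nlinarith [hFeq, hquad0]
    have hr0 : ∀ x, r x = 0 := by
      intro x
      have := (Finset.sum_eq_zero_iff_of_nonneg (fun x _ => sq_nonneg (r x))).1 hRzero x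
        (Finset.mem_univ x)
      exact pow_eq_zero_iff (by norm_num) |>.1 this
    have hFzero : F = 0 := by
      have : |F| ≤ 0 := by rw [hRzero] at hFle; simpa using hFle
      exact abs_eq_zero.1 (le_antisymm this (abs_nonneg F))
    have hQWzero : ∑ u, ∑ v, BW w θ u v * (z u - z v) ^ 2 = 0 := by
      rw [hquad0, hRzero, hFzero] at hFeq
      have : (k:ℝ) * ∑ u, ∑ v, BW w θ u v * (z u - z v) ^ 2 = 0 := by linarith
      exact (mul_eq_zero.1 this).resolve_left (ne_of_gt hk0)
    have hkerW : (hessW w θ).mulVec z = 0 := by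
      have hiff := psdW.dotProduct_mulVec_zero_iff z
      rw [star_trivial] at hiff
      refine hiff.1 ?_
      rw [qW, hQWzero, mul_zero]
    obtain ⟨t, ht⟩ := (kerW z).1 hkerW
    refine ⟨t, funext fun x => ?_⟩
    rw [hy x, hr0 x, ht]
    simp
end
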